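/- In ℚ(s,m), setting r = −2s(2sm−m+8s³−88s²+72s−17)/((m−4s²−22s+1)(m+4s²+22s−1)) and z = rm + s(2s−1), the identity z² = (4s²+22s−1)²r² − 2s(8s³−88s²+72s−17)r + s²(2s−1)² holds. -/

import Mathlib

set_option maxHeartbeats 2000000

/-- In `ℚ(s,m)`, with `r = −2s(2sm−m+8s³−88s²+72s−17)/((m−4s²−22s+1)(m+4s²+22s−1))`
and `z = rm + s(2s−1)`, the identity
`z² = (4s²+22s−1)²r² − 2s(8s³−88s²+72s−17)r + s²(2s−1)²` holds
(rational parametrization of `Y₋(25)`). -/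
theorem Y25_parametrization :
    let K := FractionRing (MvPolynomial (Fin 2) ℚ)
    let s : K := algebraMap (MvPolynomial (Fin 2) ℚ) K (MvPolynomial.X 0)
    let m : K := algebraMap (MvPolynomial (Fin 2) ℚ) K (MvPolynomial.X 1)
    let r : K := -2*s*(2*s*m - m + 8*s^3 - 88*s^2 + 72*s - 17) /
      ((m - 4*s^2 - 22*s + 1)*(m + 4*s^2 + 22*s - 1))
    let z : K := r*m + s*(2*s - 1)
    z^2 = (4*s^2 + 22*s - 1)^2*r^2 - 2*s*(8*s^3 - 88*s^2 + 72*s - 17)*r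
      + s^2*(2*s - 1)^2 := by
  intro K s m r z
  have hinj : Function.Injective (algebraMap (MvPolynomial (Fin 2) ℚ) K) :=
    IsFractionRing.injective _ _
  have key : ∀ p : MvPolynomial (Fin 2) ℚ, p ≠ 0 →
      algebraMap (MvPolynomial (Fin 2) ℚ) K p ≠ 0 := by
    intro p hp h
    exact hp (hinj (h.trans (map_zero _).symm))
  have h1 : m - 4*s^2 - 22*s + 1 ≠ 0 := by
    have : m - 4*s^2 - 22*s + 1 = algebraMap (MvPolynomial (Fin 2) ℚ) K
        (MvPolynomial.X 1 - 4*(MvPolynomial.X 0)^2 - 22*MvPolynomial.X 0 + 1) := by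
      simp [s, m, map_sub, map_add, map_mul, map_pow, map_ofNat]
    rw [this]
    apply key
    intro h
    have := congrArg (MvPolynomial.eval fun i => if i = 1 then (2:ℚ) else 0) h
    simp at this
    norm_num at this
  have h2 : m + 4*s^2 + 22*s - 1 ≠ 0 := by
    have : m + 4*s^2 + 22*s - 1 = algebraMap (MvPolynomial (Fin 2) ℚ) K
        (MvPolynomial.X 1 + 4*(MvPolynomial.X 0)^2 + 22*MvPolynomial.X 0 - 1) := by
      simp [s, m, map_sub, map_add, map_mul, map_pow, map_ofNat]
    rw [this]
    apply key
    intro h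
    have := congrArg (MvPolynomial.eval fun i => if i = 1 then (2:ℚ) else 0) h
    simp at this
    norm_num at this
  show (r*m + s*(2*s - 1))^2 = _
  rw [show r = -2*s*(2*s*m - m + 8*s^3 - 88*s^2 + 72*s - 17) /
      ((m - 4*s^2 - 22*s + 1)*(m + 4*s^2 + 22*s - 1)) from rfl]
  have hr : (-2*s*(2*s*m - m + 8*s^3 - 88*s^2 + 72*s - 17) /
      ((m - 4*s^2 - 22*s + 1)*(m + 4*s^2 + 22*s - 1))) *
      ((m - 4*s^2 - 22*s + 1)*(m + 4*s^2 + 22*s - 1)) =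
      -2*s*(2*s*m - m + 8*s^3 - 88*s^2 + 72*s - 17) :=
    div_mul_cancel₀ _ (mul_ne_zero h1 h2)
  linear_combination (-2*s*(2*s*m - m + 8*s^3 - 88*s^2 + 72*s - 17) /
      ((m - 4*s^2 - 22*s + 1)*(m + 4*s^2 + 22*s - 1))) * hr
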